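/- arXiv:2304.08075 — 2 statements merged into one kernel-verified Lean document; each statement's English description precedes it below -/
import Mathlib

section
/- Let ν be a measure on ℝ^d with ∫ max(‖η‖, ‖η‖²) ν(dη) < ∞ and support contained in [-m,∞)^d for some m ≥ 0. Then the function J(ξ) = ∫ (e^{-⟨ξ,η⟩} - 1 + ⟨ξ,η⟩) ν(dη) is well defined and twice continuously differentiable on (0, 1/m)^d, with bounded first-order partial derivatives on (0,1/m)^d, and J(0) = 0. -/
set_option maxHeartbeats 1000000
set_option synthInstance.maxHeartbeats 1000000

open MeasureTheory Set RealInnerProductSpace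

private lemma aux_abs_exp {c x : ℝ} (hc : 0 ≤ c) (hx : x ≤ c) :
    |Real.exp x - 1 - x| ≤ Real.exp c * x ^ 2 := by
  have h0 : 0 ≤ Real.exp x - 1 - x := by nlinarith [Real.add_one_le_exp x]
  rw [abs_of_nonneg h0]
  have hec : (1:ℝ) ≤ Real.exp c := Real.one_le_exp hc
  rcases le_or_gt x 0 with h | h
  · rcases le_or_gt (-1) x with h1 | h1
    · have := Real.abs_exp_sub_one_sub_id_le (x := x) (by rw [abs_le]; constructor <;> linarith)
      rw [abs_le] at this
      nlinarith [sq_nonneg x]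
    · have hx1 : Real.exp x ≤ 1 := Real.exp_le_one_iff.2 h
      nlinarith [sq_nonneg x]
  · have he1 : Real.exp x ≤ Real.exp c := Real.exp_le_exp.2 hx
    rcases le_or_gt 1 x with h1 | h1
    · nlinarith [mul_le_mul_of_nonneg_left (show (1:ℝ) ≤ x^2 by nlinarith) (Real.exp_pos c).le]
    · have key : Real.exp x * (1 - x) ≤ 1 := by
        have := Real.add_one_le_exp (-x)
        rw [Real.exp_neg] at this
        have hp := Real.exp_pos x
        calc Real.exp x * (1 - x) = Real.exp x * (-x + 1) := by ring
        _ ≤ Real.exp x * (Real.exp x)⁻¹ := mul_le_mul_of_nonneg_left this hp.le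
        _ = 1 := mul_inv_cancel₀ hp.ne'
      nlinarith [Real.exp_pos x, sq_nonneg x]

private lemma aux_abs_one_sub_exp {c x : ℝ} (hc : 0 ≤ c) (hx : x ≤ c) :
    |1 - Real.exp x| ≤ Real.exp c := by
  have hec : (1:ℝ) ≤ Real.exp c := Real.one_le_exp hc
  have he1 : Real.exp x ≤ Real.exp c := Real.exp_le_exp.2 hx
  rw [abs_le]
  constructor <;> nlinarith [Real.exp_pos x]

private lemma aux_inner_lb {d : ℕ} (m : ℝ) (hm : 0 ≤ m) (ξ η : EuclideanSpace ℝ (Fin d))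
    (hξ : ∀ i : Fin d, 0 < ξ i ∧ (m ≠ 0 → ξ i < 1 / m))
    (hη : ∀ i : Fin d, -m ≤ η i) : -(d:ℝ) ≤ ⟪ξ, η⟫ := by
  rw [PiLp.inner_apply]
  have key : ∀ i : Fin d, (-1:ℝ) ≤ ξ i * η i := by
    intro i
    rcases eq_or_ne m 0 with h0 | h0
    · have h1 : (0:ℝ) ≤ η i := by have := hη i; rw [h0] at this; linarith
      nlinarith [(hξ i).1]
    · have hmp : 0 < m := lt_of_le_of_ne hm (Ne.symm h0)
      have h2 : ξ i < 1 / m := (hξ i).2 h0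
      have h3 : ξ i * m < 1 := by
        have := mul_lt_mul_of_pos_right h2 hmp
        rwa [one_div_mul_cancel h0] at this
      nlinarith [(hξ i).1, hη i, mul_le_mul_of_nonneg_left (hη i) (hξ i).1.le]
  calc -(d:ℝ) = ∑ _i : Fin d, (-1:ℝ) := by simp
  _ ≤ ∑ i, ξ i * η i := Finset.sum_le_sum fun i _ => key i
  _ = ∑ i, ⟪ξ i, η i⟫ := by simp [mul_comm]

private lemma aux_hasFDerivAt_F {d : ℕ} (η ξ : EuclideanSpace ℝ (Fin d)) :
    HasFDerivAt (fun ξ : EuclideanSpace ℝ (Fin d) => Real.exp (-⟪ξ, η⟫) - 1 + ⟪ξ, η⟫)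
      ((1 - Real.exp (-⟪ξ, η⟫)) • innerSL ℝ η) ξ := by
  have hlin : HasFDerivAt (fun ξ : EuclideanSpace ℝ (Fin d) => ⟪η, ξ⟫) (innerSL ℝ η) ξ :=
    (innerSL ℝ η).hasFDerivAt
  have hg : HasDerivAt (fun t : ℝ => Real.exp (-t) - 1 + t) (1 - Real.exp (-⟪η, ξ⟫)) ⟪η, ξ⟫ := by
    have h1 : HasDerivAt (fun t : ℝ => Real.exp (-t)) (-Real.exp (-⟪η, ξ⟫)) ⟪η, ξ⟫ := by
      simpa [Function.comp_def] using (Real.hasDerivAt_exp (-⟪η, ξ⟫)).comp ⟪η, ξ⟫ ((hasDerivAt_id _).neg)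
    have h2 := (h1.sub_const 1).add (hasDerivAt_id ⟪η, ξ⟫)
    rw [show -Real.exp (-⟪η, ξ⟫) + 1 = 1 - Real.exp (-⟪η, ξ⟫) by ring] at h2
    exact h2
  have key := hg.comp_hasFDerivAt ξ hlin
  simp only [real_inner_comm η] at key ⊢
  exact key

private lemma aux_hasFDerivAt_F' {d : ℕ} (η ξ : EuclideanSpace ℝ (Fin d)) :
    HasFDerivAt (fun ξ : EuclideanSpace ℝ (Fin d) => (1 - Real.exp (-⟪ξ, η⟫)) • innerSL ℝ η)
      ((Real.exp (-⟪ξ, η⟫) • innerSL ℝ η).smulRight (innerSL ℝ η)) ξ := by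
  rw [show (fun ξ : EuclideanSpace ℝ (Fin d) => (1 - Real.exp (-⟪ξ, η⟫)) • innerSL ℝ η)
      = (fun ξ : EuclideanSpace ℝ (Fin d) => (1 - Real.exp (-⟪η, ξ⟫)) • innerSL ℝ η) from
    funext fun ξ => by rw [real_inner_comm], real_inner_comm η ξ]
  have hlin : HasFDerivAt (fun ξ : EuclideanSpace ℝ (Fin d) => ⟪η, ξ⟫) (innerSL ℝ η) ξ :=
    (innerSL ℝ η).hasFDerivAt
  have hg : HasDerivAt (fun t : ℝ => 1 - Real.exp (-t)) (Real.exp (-⟪η, ξ⟫)) ⟪η, ξ⟫ := by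
    have h1 : HasDerivAt (fun t : ℝ => Real.exp (-t)) (-Real.exp (-⟪η, ξ⟫)) ⟪η, ξ⟫ := by
      simpa [Function.comp_def] using (Real.hasDerivAt_exp (-⟪η, ξ⟫)).comp ⟪η, ξ⟫ ((hasDerivAt_id _).neg)
    have h2 := (hasDerivAt_const ⟪η, ξ⟫ (1:ℝ)).sub h1
    rw [show 0 - -Real.exp (-⟪η, ξ⟫) = Real.exp (-⟪η, ξ⟫) by ring] at h2
    exact h2
  have hs : HasFDerivAt (fun ξ : EuclideanSpace ℝ (Fin d) => 1 - Real.exp (-⟪η, ξ⟫))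
      (Real.exp (-⟪η, ξ⟫) • innerSL ℝ η) ξ := hg.comp_hasFDerivAt ξ hlin
  exact (hs.smul (hasFDerivAt_const (innerSL ℝ η) ξ)).congr_fderiv (by simp)

private lemma aux_norm_smul_innerSL {d : ℕ} (η : EuclideanSpace ℝ (Fin d)) (a : ℝ) :
    ‖a • innerSL ℝ η‖ = |a| * ‖η‖ := by
  rw [show ‖a • innerSL ℝ η‖ = ‖a‖ * ‖innerSL ℝ η‖ from norm_smul a (innerSL ℝ η)]
  simp [Real.norm_eq_abs]

private lemma aux_norm_F'' {d : ℕ} (η : EuclideanSpace ℝ (Fin d)) (a : ℝ) :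
    ‖(a • innerSL ℝ η).smulRight (innerSL ℝ η)‖ = |a| * ‖η‖ * ‖η‖ := by
  rw [ContinuousLinearMap.norm_smulRight_apply, aux_norm_smul_innerSL]
  simp

/-- if `ν` has `∫ max(‖η‖,‖η‖²) dν < ∞` and is concentrated on `[-m,∞)^d`
(`m ≥ 0`), then `J ξ = ∫ (e^{-⟪ξ,η⟫} - 1 + ⟪ξ,η⟫) dν` is well defined and `C²` on the
open box `(0, 1/m)^d` (with `1/m = ∞` when `m = 0`), has bounded first-order derivative
there, and `J 0 = 0`. -/
theorem stmt_1 {d : ℕ} (ν : Measure (EuclideanSpace ℝ (Fin d))) (m : ℝ) (hm : 0 ≤ m)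
    (hint : Integrable (fun η : EuclideanSpace ℝ (Fin d) => max ‖η‖ (‖η‖ ^ 2)) ν)
    (hsupp : ∀ᵐ η ∂ν, ∀ i : Fin d, -m ≤ η i)
    (J : EuclideanSpace ℝ (Fin d) → ℝ)
    (hJ : ∀ ξ, J ξ = ∫ η, (Real.exp (-⟪ξ, η⟫) - 1 + ⟪ξ, η⟫) ∂ν)
    (S : Set (EuclideanSpace ℝ (Fin d)))
    (hS : S = {ξ | ∀ i : Fin d, 0 < ξ i ∧ (m ≠ 0 → ξ i < 1 / m)}) :
    (∀ ξ ∈ S, Integrable (fun η => Real.exp (-⟪ξ, η⟫) - 1 + ⟪ξ, η⟫) ν) ∧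
    ContDiffOn ℝ 2 J S ∧
    (∃ C : ℝ, ∀ ξ ∈ S, ‖fderiv ℝ J ξ‖ ≤ C) ∧
    J 0 = 0 := by
  classical
  have hd0 : (0:ℝ) ≤ (d:ℝ) := Nat.cast_nonneg d
  -- S is open
  have hSopen : IsOpen S := by
    rw [hS, show {ξ : EuclideanSpace ℝ (Fin d) | ∀ i : Fin d, 0 < ξ i ∧ (m ≠ 0 → ξ i < 1 / m)}
        = ⋂ i : Fin d, {ξ : EuclideanSpace ℝ (Fin d) | 0 < ξ i ∧ (m ≠ 0 → ξ i < 1 / m)} from by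
      ext ξ; simp [Set.mem_iInter]]
    refine isOpen_iInter_of_finite fun i => ?_
    have hc : Continuous fun ξ : EuclideanSpace ℝ (Fin d) => ξ i := by
      exact (EuclideanSpace.proj (𝕜 := ℝ) i).continuous
    rcases eq_or_ne m 0 with h0 | h0
    · rw [show {ξ : EuclideanSpace ℝ (Fin d) | 0 < ξ i ∧ (m ≠ 0 → ξ i < 1 / m)}
          = {ξ : EuclideanSpace ℝ (Fin d) | 0 < ξ i} from by ext ξ; simp [h0]]
      exact isOpen_lt continuous_const hc
    · rw [show {ξ : EuclideanSpace ℝ (Fin d) | 0 < ξ i ∧ (m ≠ 0 → ξ i < 1 / m)}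
          = {ξ : EuclideanSpace ℝ (Fin d) | 0 < ξ i} ∩
            {ξ : EuclideanSpace ℝ (Fin d) | ξ i < 1 / m} from by ext ξ; simp [h0]]
      exact (isOpen_lt continuous_const hc).inter (isOpen_lt hc continuous_const)
  -- lower bound of the inner product on S
  have hlb : ∀ ξ ∈ S, ∀ η : EuclideanSpace ℝ (Fin d),
      (∀ i : Fin d, -m ≤ η i) → -⟪ξ, η⟫ ≤ (d:ℝ) := by
    intro ξ hξ η hη
    rw [hS] at hξ
    have := aux_inner_lb m hm ξ η hξ hη
    linarith
  -- pointwise bounds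
  have hbF : ∀ ξ ∈ S, ∀ η : EuclideanSpace ℝ (Fin d), (∀ i : Fin d, -m ≤ η i) →
      |Real.exp (-⟪ξ, η⟫) - 1 + ⟪ξ, η⟫|
        ≤ (Real.exp d * ‖ξ‖ ^ 2) * max ‖η‖ (‖η‖ ^ 2) := by
    intro ξ hξ η hη
    have h1 := aux_abs_exp hd0 (hlb ξ hξ η hη)
    rw [show Real.exp (-⟪ξ, η⟫) - 1 - -⟪ξ, η⟫ = Real.exp (-⟪ξ, η⟫) - 1 + ⟪ξ, η⟫ by ring] at h1
    have habs := abs_real_inner_le_norm ξ η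
    have h2 : (-⟪ξ, η⟫) ^ 2 ≤ ‖ξ‖ ^ 2 * ‖η‖ ^ 2 := by
      nlinarith [mul_le_mul habs habs (abs_nonneg ⟪ξ, η⟫) (by positivity : (0:ℝ) ≤ ‖ξ‖ * ‖η‖),
        sq_abs ⟪ξ, η⟫]
    have h3 : ‖η‖ ^ 2 ≤ max ‖η‖ (‖η‖ ^ 2) := le_max_right _ _
    have hep := (Real.exp_pos (d:ℝ)).le
    calc |Real.exp (-⟪ξ, η⟫) - 1 + ⟪ξ, η⟫| ≤ Real.exp d * (-⟪ξ, η⟫) ^ 2 := h1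
    _ ≤ Real.exp d * (‖ξ‖ ^ 2 * ‖η‖ ^ 2) := mul_le_mul_of_nonneg_left h2 hep
    _ ≤ Real.exp d * (‖ξ‖ ^ 2 * max ‖η‖ (‖η‖ ^ 2)) := by
        refine mul_le_mul_of_nonneg_left ?_ hep
        exact mul_le_mul_of_nonneg_left h3 (by positivity)
    _ = (Real.exp d * ‖ξ‖ ^ 2) * max ‖η‖ (‖η‖ ^ 2) := by ring
  have hbF' : ∀ ξ ∈ S, ∀ η : EuclideanSpace ℝ (Fin d), (∀ i : Fin d, -m ≤ η i) →
      ‖(1 - Real.exp (-⟪ξ, η⟫)) • innerSL ℝ η‖ ≤ Real.exp d * max ‖η‖ (‖η‖ ^ 2) := by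
    intro ξ hξ η hη
    rw [aux_norm_smul_innerSL]
    exact mul_le_mul (aux_abs_one_sub_exp hd0 (hlb ξ hξ η hη)) (le_max_left _ _)
      (norm_nonneg η) (Real.exp_pos _).le
  have hbF'' : ∀ ξ ∈ S, ∀ η : EuclideanSpace ℝ (Fin d), (∀ i : Fin d, -m ≤ η i) →
      ‖(Real.exp (-⟪ξ, η⟫) • innerSL ℝ η).smulRight (innerSL ℝ η)‖
        ≤ Real.exp d * max ‖η‖ (‖η‖ ^ 2) := by
    intro ξ hξ η hη
    rw [aux_norm_F'', abs_of_pos (Real.exp_pos _)]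
    have h1 : Real.exp (-⟪ξ, η⟫) ≤ Real.exp d := Real.exp_le_exp.2 (hlb ξ hξ η hη)
    have h3 : ‖η‖ * ‖η‖ ≤ max ‖η‖ (‖η‖ ^ 2) := by
      rw [← pow_two]; exact le_max_right _ _
    calc Real.exp (-⟪ξ, η⟫) * ‖η‖ * ‖η‖ = Real.exp (-⟪ξ, η⟫) * (‖η‖ * ‖η‖) := by ring
    _ ≤ Real.exp d * max ‖η‖ (‖η‖ ^ 2) :=
        mul_le_mul h1 h3 (by positivity) (Real.exp_pos _).le
  -- continuity in η
  have hcontF : ∀ ξ : EuclideanSpace ℝ (Fin d),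
      Continuous fun η : EuclideanSpace ℝ (Fin d) => Real.exp (-⟪ξ, η⟫) - 1 + ⟪ξ, η⟫ :=
    fun ξ => ((Real.continuous_exp.comp (innerSL ℝ ξ).continuous.neg).sub continuous_const).add
      (innerSL ℝ ξ).continuous
  have hcontF' : ∀ ξ : EuclideanSpace ℝ (Fin d),
      Continuous fun η : EuclideanSpace ℝ (Fin d) => (1 - Real.exp (-⟪ξ, η⟫)) • innerSL ℝ η :=
    fun ξ => (continuous_const.sub (Real.continuous_exp.comp (innerSL ℝ ξ).continuous.neg)).smul
      (innerSL ℝ).continuous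
  have hcontF'' : ∀ ξ : EuclideanSpace ℝ (Fin d),
      Continuous fun η : EuclideanSpace ℝ (Fin d) =>
        (Real.exp (-⟪ξ, η⟫) • innerSL ℝ η).smulRight (innerSL ℝ η) := by
    intro ξ
    have h1 : Continuous fun η : EuclideanSpace ℝ (Fin d) => innerSL ℝ η := (innerSL ℝ).continuous
    have h2 : Continuous fun η : EuclideanSpace ℝ (Fin d) =>
        Real.exp (-⟪ξ, η⟫) • innerSL ℝ η :=
      (Real.continuous_exp.comp (innerSL ℝ ξ).continuous.neg).smul h1
    exact (isBoundedBilinearMap_smulRight (𝕜 := ℝ)).continuous.comp (h2.prodMk h1)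
  -- integrability of the integrand
  have hintF : ∀ ξ ∈ S, Integrable (fun η => Real.exp (-⟪ξ, η⟫) - 1 + ⟪ξ, η⟫) ν := by
    intro ξ hξ
    refine (hint.const_mul (Real.exp d * ‖ξ‖ ^ 2)).mono' (hcontF ξ).aestronglyMeasurable ?_
    filter_upwards [hsupp] with η hη
    rw [Real.norm_eq_abs]
    exact hbF ξ hξ η hη
  have hintF' : ∀ ξ ∈ S, Integrable (fun η => (1 - Real.exp (-⟪ξ, η⟫)) • innerSL ℝ η) ν := by
    intro ξ hξ
    refine (hint.const_mul (Real.exp d)).mono' (hcontF' ξ).aestronglyMeasurable ?_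
    filter_upwards [hsupp] with η hη
    exact hbF' ξ hξ η hη
  -- first derivative
  have hJG : ∀ ξ ∈ S, HasFDerivAt J
      (∫ η, (1 - Real.exp (-⟪ξ, η⟫)) • innerSL ℝ η ∂ν) ξ := by
    intro ξ hξ
    obtain ⟨ε, hε, hball⟩ := Metric.isOpen_iff.1 hSopen ξ hξ
    rw [funext hJ]
    refine hasFDerivAt_integral_of_dominated_of_fderiv_le (𝕜 := ℝ)
      (F' := fun x η => (1 - Real.exp (-⟪x, η⟫)) • innerSL ℝ η) (Metric.ball_mem_nhds ξ hε)
      (Filter.Eventually.of_forall fun x => (hcontF x).aestronglyMeasurable)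
      (hintF ξ hξ) ((hcontF' ξ).aestronglyMeasurable) ?_ (hint.const_mul (Real.exp d)) ?_
    · filter_upwards [hsupp] with η hη x hx
      exact hbF' x (hball hx) η hη
    · exact Filter.Eventually.of_forall fun η x _ => aux_hasFDerivAt_F η x
  -- second derivative
  have hGH : ∀ ξ ∈ S, HasFDerivAt (fun ξ => ∫ η, (1 - Real.exp (-⟪ξ, η⟫)) • innerSL ℝ η ∂ν)
      (∫ η, (Real.exp (-⟪ξ, η⟫) • innerSL ℝ η).smulRight (innerSL ℝ η) ∂ν) ξ := by
    intro ξ hξ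
    obtain ⟨ε, hε, hball⟩ := Metric.isOpen_iff.1 hSopen ξ hξ
    refine hasFDerivAt_integral_of_dominated_of_fderiv_le (𝕜 := ℝ)
      (F' := fun x η => (Real.exp (-⟪x, η⟫) • innerSL ℝ η).smulRight (innerSL ℝ η)) (Metric.ball_mem_nhds ξ hε)
      (Filter.Eventually.of_forall fun x => (hcontF' x).aestronglyMeasurable)
      (hintF' ξ hξ) ((hcontF'' ξ).aestronglyMeasurable) ?_ (hint.const_mul (Real.exp d)) ?_
    · filter_upwards [hsupp] with η hη x hx
      exact hbF'' x (hball hx) η hη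
    · exact Filter.Eventually.of_forall fun η x _ => aux_hasFDerivAt_F' η x
  -- continuity of the second derivative
  have hHcont : ContinuousOn
      (fun ξ => ∫ η, (Real.exp (-⟪ξ, η⟫) • innerSL ℝ η).smulRight (innerSL ℝ η) ∂ν) S := by
    refine continuousOn_of_dominated (fun x _ => (hcontF'' x).aestronglyMeasurable)
      (fun x hx => ?_) (hint.const_mul (Real.exp d)) ?_
    · filter_upwards [hsupp] with η hη
      exact hbF'' x hx η hη
    · refine Filter.Eventually.of_forall fun η => Continuous.continuousOn ?_
      have h2 : Continuous fun ξ : EuclideanSpace ℝ (Fin d) =>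
          Real.exp (-⟪ξ, η⟫) • innerSL ℝ η := by
        have hc : Continuous fun ξ : EuclideanSpace ℝ (Fin d) => ⟪ξ, η⟫ := by
          have he : (fun ξ : EuclideanSpace ℝ (Fin d) => ⟪ξ, η⟫)
              = fun ξ : EuclideanSpace ℝ (Fin d) => ⟪η, ξ⟫ :=
            funext fun ξ => real_inner_comm _ _
          rw [he]; exact (innerSL ℝ η).continuous
        exact (Real.continuous_exp.comp hc.neg).smul continuous_const
      exact (isBoundedBilinearMap_smulRight (𝕜 := ℝ)).continuous.comp
        (h2.prodMk continuous_const)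
  have hfd : ∀ ξ ∈ S, fderiv ℝ J ξ = ∫ η, (1 - Real.exp (-⟪ξ, η⟫)) • innerSL ℝ η ∂ν :=
    fun ξ hξ => (hJG ξ hξ).fderiv
  have hfdG : ∀ ξ ∈ S, fderiv ℝ (fun ξ => ∫ η, (1 - Real.exp (-⟪ξ, η⟫)) • innerSL ℝ η ∂ν) ξ
      = ∫ η, (Real.exp (-⟪ξ, η⟫) • innerSL ℝ η).smulRight (innerSL ℝ η) ∂ν :=
    fun ξ hξ => (hGH ξ hξ).fderiv
  have hCG : ContDiffOn ℝ 1 (fun ξ => ∫ η, (1 - Real.exp (-⟪ξ, η⟫)) • innerSL ℝ η ∂ν) S := by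
    rw [show (1 : WithTop ℕ∞) = 0 + 1 by norm_num, contDiffOn_succ_iff_fderiv_of_isOpen hSopen]
    refine ⟨fun ξ hξ => (hGH ξ hξ).differentiableAt.differentiableWithinAt, by simp, ?_⟩
    rw [contDiffOn_zero]
    exact hHcont.congr fun ξ hξ => hfdG ξ hξ
  have hC2 : ContDiffOn ℝ 2 J S := by
    rw [show (2 : WithTop ℕ∞) = 1 + 1 by norm_num, contDiffOn_succ_iff_fderiv_of_isOpen hSopen]
    refine ⟨fun ξ hξ => (hJG ξ hξ).differentiableAt.differentiableWithinAt, by simp, ?_⟩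
    exact hCG.congr hfd
  refine ⟨hintF, hC2, ⟨Real.exp d * ∫ η, max ‖η‖ (‖η‖ ^ 2) ∂ν, fun ξ hξ => ?_⟩, ?_⟩
  · rw [hfd ξ hξ]
    calc ‖∫ η, (1 - Real.exp (-⟪ξ, η⟫)) • innerSL ℝ η ∂ν‖
        ≤ ∫ η, Real.exp d * max ‖η‖ (‖η‖ ^ 2) ∂ν := by
          refine norm_integral_le_of_norm_le (hint.const_mul (Real.exp d)) ?_
          filter_upwards [hsupp] with η hη
          exact hbF' ξ hξ η hη
    _ = Real.exp d * ∫ η, max ‖η‖ (‖η‖ ^ 2) ∂ν := integral_const_mul _ _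
  · rw [hJ]
    simp
end

section
/- Deterministic Morton-type blow-up: let f(0,·) ∈ C([0,T*]) with f(0,v) ≥ K for v ∈ [t,S] where 0 < t < S ≤ T*. Define η(s,S) = (∫_s^S f(0,v)dv)^{-1} − s/2 for 0 ≤ s ≤ t (the deterministic case M ≡ 1, g ≡ 1). If K > 2/(t(S−t)), then there exists s ∈ (0,t] with η(s,S) ≤ 0; hence the explicit solution formula for the forward rate f(·,S) blows up before time t. -/
open Set intervalIntegral

/-- deterministic Morton-type blow-up. If `f₀` is continuous on `[0,T*]`,
`0 < t < S ≤ T*`, `f₀ ≥ K` on `[t,S]` and `K > 2/(t(S-t))`, then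
`η s = (∫_s^S f₀)⁻¹ - s/2` vanishes (becomes `≤ 0`) at some `s ∈ (0,t]`, so the
explicit forward-rate formula blows up before time `t`. -/
theorem stmt_9 (Tstar t S K : ℝ) (f₀ : ℝ → ℝ)
    (hf₀ : ContinuousOn f₀ (Set.Icc 0 Tstar))
    (ht : 0 < t) (htS : t < S) (hST : S ≤ Tstar)
    (hK : ∀ v ∈ Set.Icc t S, K ≤ f₀ v)
    (hKbig : 2 / (t * (S - t)) < K)
    (η : ℝ → ℝ)
    (hη : ∀ s, η s = (∫ v in s..S, f₀ v)⁻¹ - s / 2) :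
    ∃ s ∈ Set.Ioc (0:ℝ) t, η s ≤ 0 := by
  refine ⟨t, ⟨ht, le_refl t⟩, ?_⟩
  have hts : t ≤ S := le_of_lt htS
  have hsub : Set.Icc t S ⊆ Set.Icc 0 Tstar :=
    Set.Icc_subset_Icc (le_of_lt ht) hST
  have hint : IntervalIntegrable f₀ MeasureTheory.volume t S := by
    apply ContinuousOn.intervalIntegrable
    rw [Set.uIcc_of_le hts]
    exact hf₀.mono hsub
  have hKpos : 0 < K := lt_trans (div_pos two_pos (by nlinarith)) hKbig
  have hlow : K * (S - t) ≤ ∫ v in t..S, f₀ v := by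
    have h1 : (∫ _ in t..S, K) ≤ ∫ v in t..S, f₀ v := by
      apply intervalIntegral.integral_mono_on hts
        (intervalIntegrable_const) hint
      exact hK
    simpa [mul_comm] using h1
  have hKSpos : 0 < K * (S - t) := by nlinarith
  have hintpos : 0 < ∫ v in t..S, f₀ v := lt_of_lt_of_le hKSpos hlow
  have hinv : (∫ v in t..S, f₀ v)⁻¹ ≤ (K * (S - t))⁻¹ :=
    inv_anti₀ hKSpos hlow
  have h2t : 2 / t < K * (S - t) := by
    rw [div_lt_iff₀ ht]
    have := (div_lt_iff₀ (by nlinarith : 0 < t * (S - t))).mp hKbig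
    nlinarith
  have hinv2 : (K * (S - t))⁻¹ < t / 2 := by
    rw [inv_lt_comm₀ hKSpos (by positivity), inv_div]
    exact h2t
  rw [hη t]
  linarith [lt_of_le_of_lt hinv hinv2]
end
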